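/- Fix T > 0 and Q > 0. Let θ, η : [0,T] → ℝ be continuously differentiable with η(t) > 0, θ'(t) ≤ 0, and η'(t) ≥ 0 for all t ∈ [0,T]. Let η̄ = min_{t∈[0,T]} η(t) and let θ̄ > 0 be a constant with θ̄ ≥ −θ'(t) for all t; set γ = θ̄/(2η̄) and assume √γ·T < π. If ζ : [0,T] → ℝ is twice continuously differentiable and satisfies 2η(t)ζ''(t) + 2η'(t)ζ'(t) − θ'(t)ζ(t) = 0 for all t ∈ [0,T], ζ(0) = Q, and ζ(T) = 0, then ζ(t) ≥ 0 for all t, and there exists t₀ ∈ [0,T] such that ζ is nondecreasing on [0,t₀] and nonincreasing on [t₀,T]; that is, ζ is either nonincreasing on all of [0,T] or has exactly one turning point. -/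

import Mathlib

open Set MeasureTheory Real

set_option maxHeartbeats 2000000

/-- If the permanent impact is nonincreasing, the temporary impact is
nondecreasing, and `√γ·T < π` with `γ = θ̄/(2η̄)`, then any twice continuously
differentiable solution of the Euler–Lagrange boundary value problem (with `Q > 0`) is
nonnegative and there is `t₀ ∈ [0,T]` such that `ζ` is nondecreasing on `[0,t₀]` and
nonincreasing on `[t₀,T]` (either monotone decreasing or exactly one turning point). -/
theorem stmt19 (T Q : ℝ) (hT : 0 < T) (hQ : 0 < Q)
    (θ η θ' η' : ℝ → ℝ)
    (hθ : ∀ t ∈ Set.Icc 0 T, HasDerivAt θ (θ' t) t)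
    (hθ'c : ContinuousOn θ' (Set.Icc 0 T))
    (hη : ∀ t ∈ Set.Icc 0 T, HasDerivAt η (η' t) t)
    (hη'c : ContinuousOn η' (Set.Icc 0 T))
    (hηpos : ∀ t ∈ Set.Icc 0 T, 0 < η t)
    (hθ'nonpos : ∀ t ∈ Set.Icc 0 T, θ' t ≤ 0)
    (hη'nonneg : ∀ t ∈ Set.Icc 0 T, 0 ≤ η' t)
    (ηbar θbar : ℝ)
    (hηbar : IsLeast (η '' Set.Icc 0 T) ηbar)
    (hθbar : 0 < θbar)
    (hθbar' : ∀ t ∈ Set.Icc 0 T, -θ' t ≤ θbar)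
    (hγ : Real.sqrt (θbar / (2 * ηbar)) * T < Real.pi)
    (ζ ζ' ζ'' : ℝ → ℝ)
    (hζ1 : ∀ t ∈ Set.Icc 0 T, HasDerivAt ζ (ζ' t) t)
    (hζ2 : ∀ t ∈ Set.Icc 0 T, HasDerivAt ζ' (ζ'' t) t)
    (hζ''c : ContinuousOn ζ'' (Set.Icc 0 T))
    (hODE : ∀ t ∈ Set.Icc 0 T, 2 * η t * ζ'' t + 2 * η' t * ζ' t - θ' t * ζ t = 0)
    (hζ0 : ζ 0 = Q) (hζT : ζ T = 0) :
    (∀ t ∈ Set.Icc 0 T, 0 ≤ ζ t) ∧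
    ∃ t₀ ∈ Set.Icc 0 T,
      MonotoneOn ζ (Set.Icc 0 t₀) ∧ AntitoneOn ζ (Set.Icc t₀ T) := by
  have hηbar_pos : 0 < ηbar := by
    obtain ⟨x, hx, hxe⟩ := hηbar.1
    exact hxe ▸ hηpos x hx
  have hηlb : ∀ t ∈ Set.Icc 0 T, ηbar ≤ η t := fun t ht => hηbar.2 ⟨t, ht, rfl⟩
  set γ := θbar / (2 * ηbar) with hγdef
  have hγpos : 0 < γ := div_pos hθbar (by linarith)
  set s := Real.sqrt γ with hsdef
  have hs2 : s ^ 2 = γ := Real.sq_sqrt hγpos.le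
  have hspos : 0 < s := Real.sqrt_pos.mpr hγpos
  have hγ2 : 2 * ηbar * γ = θbar := by
    rw [hγdef]; field_simp
  have hζc : ContinuousOn ζ (Set.Icc 0 T) := fun t ht =>
    (hζ1 t ht).continuousAt.continuousWithinAt
  -- the comparison function
  set v : ℝ → ℝ := fun t => Real.cos (s * (t - T / 2)) with hvdef
  set vd : ℝ → ℝ := fun t => -(s * Real.sin (s * (t - T / 2))) with hvddef
  have hlin : ∀ t : ℝ, HasDerivAt (fun u => s * (u - T / 2)) s t := by
    intro t
    simpa using ((hasDerivAt_id t).sub_const (T / 2)).const_mul s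
  have hv : ∀ t : ℝ, HasDerivAt v (vd t) t := by
    intro t
    have := (Real.hasDerivAt_cos (s * (t - T / 2))).comp t (hlin t)
    simpa [hvdef, hvddef, mul_comm, Function.comp_def] using this
  have hvd : ∀ t : ℝ, HasDerivAt vd (-(γ * v t)) t := by
    intro t
    have h := (((Real.hasDerivAt_sin (s * (t - T / 2))).comp t (hlin t)).const_mul s).neg
    have h3 : -(s * (Real.cos (s * (t - T / 2)) * s)) = -(γ * v t) := by
      rw [hvdef]
      linear_combination (-(Real.cos (s * (t - T / 2)))) * hs2
    rw [h3] at h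
    rw [hvddef]
    simpa [Pi.neg_def] using h
  have hvpos : ∀ t ∈ Set.Icc 0 T, 0 < v t := by
    intro t ht
    apply Real.cos_pos_of_mem_Ioo
    have h1 : s * (T / 2) < Real.pi / 2 := by linarith [hγ]
    have habs : |s * (t - T / 2)| ≤ s * (T / 2) := by
      rw [abs_mul, abs_of_pos hspos]
      have h0 : |t - T / 2| ≤ T / 2 := abs_le.mpr ⟨by linarith [ht.1], by linarith [ht.2]⟩
      nlinarith [h0]
    obtain ⟨h2, h3⟩ := abs_le.mp habs
    exact Set.mem_Ioo.mpr ⟨by linarith, by linarith⟩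
  clear_value γ s v vd
  -- Part 1: nonnegativity via the Picone identity
  have key : ∀ t ∈ Set.Icc 0 T, 0 ≤ ζ t := by
    by_contra h
    push_neg at h
    obtain ⟨c, hc, hcneg⟩ := h
    have hc0 : 0 < c := by
      rcases hc.1.lt_or_eq with h | h
      · exact h
      · exfalso; rw [← h, hζ0] at hcneg; linarith
    have hcT : c < T := by
      rcases hc.2.lt_or_eq with h | h
      · exact h
      · exfalso; rw [h, hζT] at hcneg; linarith
    have hsub : Set.Icc 0 c ⊆ Set.Icc 0 T := Set.Icc_subset_Icc le_rfl hc.2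
    obtain ⟨a, ha, haz⟩ :=
      intermediate_value_Icc' hc.1 (hζc.mono hsub) ⟨hcneg.le, by rw [hζ0]; linarith⟩
    have hac : a < c := by
      rcases ha.2.lt_or_eq with h | h
      · exact h
      · exfalso; rw [h] at haz; linarith
    have haI : a ∈ Set.Icc 0 T := ⟨ha.1, le_trans ha.2 hc.2⟩
    have haT : a < T := lt_of_lt_of_le hac hc.2
    have hsub2 : Set.Icc a T ⊆ Set.Icc 0 T := Set.Icc_subset_Icc ha.1 le_rfl
    set F : ℝ → ℝ := fun t => 2 * η t * ζ t * ζ' t - 2 * ηbar * vd t * (ζ t) ^ 2 / v t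
      with hFdef
    set G : ℝ → ℝ := fun t =>
      (θbar + θ' t) * (ζ t) ^ 2 + (2 * η t - 2 * ηbar) * (ζ' t) ^ 2 +
        2 * ηbar * (ζ' t - ζ t * vd t / v t) ^ 2 with hGdef
    have hFd : ∀ t ∈ Set.Icc 0 T, HasDerivAt F (G t) t := by
      intro t ht
      have hvne : v t ≠ 0 := (hvpos t ht).ne'
      have hA := (((hη t ht).const_mul 2).mul (hζ1 t ht)).mul (hζ2 t ht)
      have hB := ((((hvd t).const_mul (2 * ηbar)).mul ((hζ1 t ht).pow 2)).div
        (hv t) hvne)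
      have hAB := hA.sub hB
      refine hAB.congr_deriv (Eq.symm ?_)
      have hode := hODE t ht
      simp only [hGdef]
      simp only [Pi.mul_apply, Pi.pow_apply]
      have hvexp : (ζ' t - ζ t * vd t / v t) ^ 2 = (ζ' t * v t - ζ t * vd t) ^ 2 / v t ^ 2 := by
        field_simp
      rw [hvexp]
      field_simp
      linear_combination (-(ζ t * v t ^ 2)) * hode + (-(ζ t ^ 2 * v t ^ 2)) * hγ2
    have hFc : ContinuousOn F (Set.Icc a T) := fun t ht =>
      (hFd t (hsub2 ht)).continuousAt.continuousWithinAt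
    have hGnonneg : ∀ t ∈ Set.Icc 0 T, 0 ≤ G t := by
      intro t ht
      have h1 : 0 ≤ θbar + θ' t := by linarith [hθbar' t ht]
      have h2 : 0 ≤ 2 * η t - 2 * ηbar := by linarith [hηlb t ht]
      have := sq_nonneg (ζ t); have := sq_nonneg (ζ' t)
      have := sq_nonneg (ζ' t - ζ t * vd t / v t)
      rw [hGdef]
      positivity
    have hmono : MonotoneOn F (Set.Icc a T) := by
      apply monotoneOn_of_deriv_nonneg (convex_Icc a T) hFc
      · intro t ht
        rw [interior_Icc] at ht
        exact (hFd t (hsub2 (Set.Ioo_subset_Icc_self ht))).differentiableAt.differentiableWithinAt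
      · intro t ht
        rw [interior_Icc] at ht
        rw [(hFd t (hsub2 (Set.Ioo_subset_Icc_self ht))).deriv]
        exact hGnonneg t (hsub2 (Set.Ioo_subset_Icc_self ht))
    have hFa : F a = 0 := by rw [hFdef]; simp [haz]
    have hFT : F T = 0 := by rw [hFdef]; simp [hζT]
    have hFzero : ∀ t ∈ Set.Icc a T, F t = 0 := by
      intro t ht
      have h1 : F a ≤ F t := hmono ⟨le_refl a, haT.le⟩ ht ht.1
      have h2 : F t ≤ F T := hmono ht ⟨haT.le, le_refl T⟩ ht.2
      linarith
    have hG0 : ∀ t ∈ Set.Ioo a T, G t = 0 := by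
      intro t ht
      have hev : F =ᶠ[nhds t] fun _ => 0 := by
        filter_upwards [isOpen_Ioo.mem_nhds ht] with x hx
        exact hFzero x (Set.Ioo_subset_Icc_self hx)
      have hd0 : HasDerivAt F 0 t := (hasDerivAt_const t (0 : ℝ)).congr_of_eventuallyEq hev
      exact ((hFd t (hsub2 (Set.Ioo_subset_Icc_self ht))).unique hd0)
    -- from G = 0 deduce ζ' v = ζ vd on Ioo a T
    have hprop : ∀ t ∈ Set.Ioo a T, ζ' t * v t - ζ t * vd t = 0 := by
      intro t ht
      have htI : t ∈ Set.Icc 0 T := hsub2 (Set.Ioo_subset_Icc_self ht)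
      have hvne : v t ≠ 0 := (hvpos t htI).ne'
      have h0 := hG0 t ht
      rw [hGdef] at h0
      have h1 : 0 ≤ (θbar + θ' t) * (ζ t) ^ 2 := by
        have := hθbar' t htI
        nlinarith [sq_nonneg (ζ t)]
      have h2 : 0 ≤ (2 * η t - 2 * ηbar) * (ζ' t) ^ 2 := by
        have := hηlb t htI
        nlinarith [sq_nonneg (ζ' t)]
      have h3' : 2 * ηbar * (ζ' t - ζ t * vd t / v t) ^ 2 ≤ 0 := by linarith
      have h3 : (ζ' t - ζ t * vd t / v t) ^ 2 = 0 := by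
        nlinarith [sq_nonneg (ζ' t - ζ t * vd t / v t), hηbar_pos]
      have h4 : ζ' t - ζ t * vd t / v t = 0 := sq_eq_zero_iff.mp h3
      field_simp at h4
      linarith [h4]
    -- the quotient ζ / v is constant on [a, T]
    set g : ℝ → ℝ := fun t => ζ t / v t with hgdef
    have hgd : ∀ t ∈ Set.Icc 0 T, HasDerivAt g ((ζ' t * v t - ζ t * vd t) / (v t) ^ 2) t := by
      intro t ht
      exact (hζ1 t ht).div (hv t) (hvpos t ht).ne'
    have hgc : ContinuousOn g (Set.Icc a T) := fun t ht =>
      (hgd t (hsub2 ht)).continuousAt.continuousWithinAt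
    have hgderiv : ∀ t ∈ Set.Ioo a T, deriv g t = 0 := by
      intro t ht
      rw [(hgd t (hsub2 (Set.Ioo_subset_Icc_self ht))).deriv, hprop t ht]
      simp
    have hgmono : MonotoneOn g (Set.Icc a T) := by
      apply monotoneOn_of_deriv_nonneg (convex_Icc a T) hgc
      · intro t ht
        rw [interior_Icc] at ht
        exact (hgd t (hsub2 (Set.Ioo_subset_Icc_self ht))).differentiableAt.differentiableWithinAt
      · intro t ht
        rw [interior_Icc] at ht
        rw [hgderiv t ht]
    have hganti : AntitoneOn g (Set.Icc a T) := by
      apply antitoneOn_of_deriv_nonpos (convex_Icc a T) hgc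
      · intro t ht
        rw [interior_Icc] at ht
        exact (hgd t (hsub2 (Set.Ioo_subset_Icc_self ht))).differentiableAt.differentiableWithinAt
      · intro t ht
        rw [interior_Icc] at ht
        rw [hgderiv t ht]
    have hga : g a = 0 := by rw [hgdef]; simp [haz]
    have hcmem : c ∈ Set.Icc a T := ⟨hac.le, hc.2⟩
    have hamem : a ∈ Set.Icc a T := ⟨le_refl a, haT.le⟩
    have h1 : g a ≤ g c := hgmono hamem hcmem hac.le
    have h2 : g c ≤ g a := hganti hamem hcmem hac.le
    have hgc0 : g c = 0 := by linarith
    have : ζ c = 0 := by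
      rw [hgdef] at hgc0
      simp only at hgc0
      rcases div_eq_zero_iff.mp hgc0 with h | h
      · exact h
      · exact absurd h (hvpos c hc).ne'
    linarith
  refine ⟨key, ?_⟩
  -- Part 2: monotone structure.  φ = 2 η ζ' is antitone.
  set φ : ℝ → ℝ := fun t => 2 * η t * ζ' t with hφdef
  have hφd : ∀ t ∈ Set.Icc 0 T, HasDerivAt φ (θ' t * ζ t) t := by
    intro t ht
    have h := ((hη t ht).const_mul 2).mul (hζ2 t ht)
    have hode := hODE t ht
    refine h.congr_deriv ?_
    linarith
  have hφc : ContinuousOn φ (Set.Icc 0 T) := fun t ht =>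
    (hφd t ht).continuousAt.continuousWithinAt
  have hφanti : AntitoneOn φ (Set.Icc 0 T) := by
    apply antitoneOn_of_deriv_nonpos (convex_Icc 0 T) hφc
    · intro t ht
      rw [interior_Icc] at ht
      exact (hφd t (Set.Ioo_subset_Icc_self ht)).differentiableAt.differentiableWithinAt
    · intro t ht
      rw [interior_Icc] at ht
      have htI := Set.Ioo_subset_Icc_self ht
      rw [(hφd t htI).deriv]
      exact mul_nonpos_of_nonpos_of_nonneg (hθ'nonpos t htI) (key t htI)
  by_cases hS : ∃ t ∈ Set.Icc 0 T, 0 ≤ φ t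
  · set S := {t | t ∈ Set.Icc (0:ℝ) T ∧ 0 ≤ φ t} with hSdef
    have hSne : S.Nonempty := by
      obtain ⟨t, ht, h⟩ := hS; exact ⟨t, ht, h⟩
    have hSbdd : BddAbove S := ⟨T, fun x hx => hx.1.2⟩
    set t₀ := sSup S with ht₀def
    have ht₀mem : t₀ ∈ Set.Icc 0 T := by
      refine ⟨?_, csSup_le hSne fun y hy => hy.1.2⟩
      obtain ⟨x, hx⟩ := hSne
      exact le_trans hx.1.1 (le_csSup hSbdd hx)
    refine ⟨t₀, ht₀mem, ?_, ?_⟩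
    · apply monotoneOn_of_deriv_nonneg (convex_Icc 0 t₀)
        (hζc.mono (Set.Icc_subset_Icc le_rfl ht₀mem.2))
      · intro t ht
        rw [interior_Icc] at ht
        have htI : t ∈ Set.Icc 0 T := ⟨ht.1.le, le_trans ht.2.le ht₀mem.2⟩
        exact (hζ1 t htI).differentiableAt.differentiableWithinAt
      · intro t ht
        rw [interior_Icc] at ht
        have htI : t ∈ Set.Icc 0 T := ⟨ht.1.le, le_trans ht.2.le ht₀mem.2⟩
        rw [(hζ1 t htI).deriv]
        obtain ⟨u, hu, htu⟩ := exists_lt_of_lt_csSup hSne ht.2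
        have hφt : 0 ≤ φ t := le_trans hu.2 (hφanti htI hu.1 htu.le)
        have hφt' : 0 ≤ 2 * η t * ζ' t := by simpa [hφdef] using hφt
        have hη2 : 0 < 2 * η t := by linarith [hηpos t htI]
        nlinarith [hφt', hη2]
    · apply antitoneOn_of_deriv_nonpos (convex_Icc t₀ T)
        (hζc.mono (Set.Icc_subset_Icc ht₀mem.1 le_rfl))
      · intro t ht
        rw [interior_Icc] at ht
        have htI : t ∈ Set.Icc 0 T := ⟨le_trans ht₀mem.1 ht.1.le, ht.2.le⟩
        exact (hζ1 t htI).differentiableAt.differentiableWithinAt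
      · intro t ht
        rw [interior_Icc] at ht
        have htI : t ∈ Set.Icc 0 T := ⟨le_trans ht₀mem.1 ht.1.le, ht.2.le⟩
        rw [(hζ1 t htI).deriv]
        have htS : t ∉ S := fun h => absurd (le_csSup hSbdd h) (not_le.mpr ht.1)
        have hφt : φ t < 0 := by
          by_contra h
          push_neg at h
          exact htS ⟨htI, h⟩
        have hφt' : 2 * η t * ζ' t < 0 := by simpa [hφdef] using hφt
        have hη2 : 0 < 2 * η t := by linarith [hηpos t htI]
        nlinarith [hφt', hη2]
  · push_neg at hS
    refine ⟨0, ⟨le_refl 0, hT.le⟩, ?_, ?_⟩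
    · intro x hx y hy hxy
      simp only [Set.Icc_self, Set.mem_singleton_iff] at hx hy
      rw [hx, hy]
    · apply antitoneOn_of_deriv_nonpos (convex_Icc 0 T) hζc
      · intro t ht
        rw [interior_Icc] at ht
        exact (hζ1 t (Set.Ioo_subset_Icc_self ht)).differentiableAt.differentiableWithinAt
      · intro t ht
        rw [interior_Icc] at ht
        have htI := Set.Ioo_subset_Icc_self ht
        rw [(hζ1 t htI).deriv]
        have hφt : φ t < 0 := hS t htI
        have hφt' : 2 * η t * ζ' t < 0 := by simpa [hφdef] using hφt
        have hη2 : 0 < 2 * η t := by linarith [hηpos t htI]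
        nlinarith [hφt', hη2]
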